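/- Let 1 ≤ n ≤ N, z_1,…,z_N ∈ ℂ, and z̃ = (1/N)∑_{j=1}^N z_j. With E_{A,k} the elementary symmetric polynomial of degree k in the variables indexed by A, one has: E_{[N],n}/C(N,n) − z̃^n = −(1/(2N)) · ∑_{(u,v), u≠v} (z_u−z_v)² · ∑_{k=2}^n (z̃^{n−k} / (k·C(N,k))) · E_{[N]∖{u,v},k−2}, where the outer sum is over ordered pairs of distinct indices u,v ∈ {1,…,N} and C(N,k) denotes the binomial coefficient. -/

import Mathlib

open Finset

variable {ι : Type*} [DecidableEq ι]

noncomputable def Esym (z : ι → ℂ) (s : Finset ι) (k : ℕ) : ℂ :=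
  ∑ J ∈ s.powersetCard k, ∏ j ∈ J, z j

lemma Esym_zero (z : ι → ℂ) (s : Finset ι) : Esym z s 0 = 1 := by simp [Esym]

lemma Esym_erase (z : ι → ℂ) {s : Finset ι} {a : ι} (ha : a ∈ s) (k : ℕ) :
    Esym z s (k+1) = Esym z (s.erase a) (k+1) + z a * Esym z (s.erase a) k := by
  unfold Esym
  conv_lhs => rw [← insert_erase ha, powersetCard_succ_insert (notMem_erase a s)]
  rw [sum_union, sum_image]
  · congr 1
    rw [mul_sum]
    refine sum_congr rfl fun J hJ => ?_
    rw [mem_powersetCard] at hJ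
    rw [prod_insert (fun haJ => (notMem_erase a s) (hJ.1 haJ))]
  · intro J hJ K hK hJK
    rw [mem_coe, mem_powersetCard] at hJ hK
    have haJ : a ∉ J := fun h => notMem_erase a s (hJ.1 h)
    have haK : a ∉ K := fun h => notMem_erase a s (hK.1 h)
    rwa [insert_erase_invOn.2.injOn.eq_iff] at hJK <;> simp [mem_coe, haJ, haK]
  · rw [disjoint_left]
    intro J hJ hJ'
    rw [mem_powersetCard] at hJ
    obtain ⟨K, hK, rfl⟩ := mem_image.mp hJ'
    exact notMem_erase a s (hJ.1 (mem_insert_self a K))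

lemma sum_mul_Esym (z : ι → ℂ) (s : Finset ι) (k : ℕ) :
    ∑ a ∈ s, z a * Esym z (s.erase a) k = ((k : ℂ)+1) * Esym z s (k+1) := by
  unfold Esym
  have key : ∀ J ∈ s.powersetCard (k+1), ((k:ℂ)+1) * ∏ j ∈ J, z j
      = ∑ a ∈ J, z a * ∏ j ∈ J.erase a, z j := by
    intro J hJ
    rw [mem_powersetCard] at hJ
    rw [sum_congr rfl (fun a ha => Finset.mul_prod_erase J z ha), sum_const, hJ.2]
    rw [nsmul_eq_mul]
    push_cast
    ring
  rw [mul_sum, sum_congr rfl key]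
  simp only [mul_sum]
  rw [sum_sigma', sum_sigma']
  refine sum_nbij' (fun p => ⟨insert p.1 p.2, p.1⟩) (fun p => ⟨p.2, p.1.erase p.2⟩)
    ?_ ?_ ?_ ?_ ?_
  · rintro ⟨a, J⟩ h
    simp only [mem_sigma, mem_powersetCard] at h ⊢
    obtain ⟨ha, hJ, hcard⟩ := h
    have haJ : a ∉ J := fun h' => notMem_erase a s (hJ h')
    exact ⟨⟨insert_subset ha (hJ.trans (erase_subset a s)), by rw [card_insert_of_notMem haJ, hcard]⟩, mem_insert_self a J⟩
  · rintro ⟨J, a⟩ h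
    simp only [mem_sigma, mem_powersetCard] at h ⊢
    obtain ⟨⟨hJ, hcard⟩, ha⟩ := h
    refine ⟨hJ ha, fun x hx => ?_, by rw [card_erase_of_mem ha, hcard]; rfl⟩
    rw [mem_erase] at hx ⊢
    exact ⟨hx.1, hJ hx.2⟩
  · rintro ⟨a, J⟩ h
    simp only [mem_sigma, mem_powersetCard] at h
    have haJ : a ∉ J := fun h' => notMem_erase a s (h.2.1 h')
    simp [erase_insert haJ]
  · rintro ⟨J, a⟩ h
    simp only [mem_sigma, mem_powersetCard] at h
    simp [insert_erase h.2]
  · rintro ⟨a, J⟩ h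
    simp only [mem_sigma, mem_powersetCard] at h
    have haJ : a ∉ J := fun h' => notMem_erase a s (h.2.1 h')
    simp [prod_insert haJ, erase_insert haJ]

lemma sum_Esym (z : ι → ℂ) (s : Finset ι) (k : ℕ) (h : k ≤ s.card) :
    ∑ a ∈ s, Esym z (s.erase a) k = ((s.card - k : ℕ) : ℂ) * Esym z s k := by
  cases k with
  | zero => simp [Esym_zero]
  | succ k =>
    have h1 : ∀ a ∈ s, Esym z (s.erase a) (k+1)
        = Esym z s (k+1) - z a * Esym z (s.erase a) k := by
      intro a ha
      rw [Esym_erase z ha k]; ring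
    rw [sum_congr rfl h1, sum_sub_distrib, sum_mul_Esym, sum_const, nsmul_eq_mul,
      Nat.cast_sub h]
    push_cast
    ring

section FinN
variable {N : ℕ} (z : Fin N → ℂ)

lemma ite2erase (f : Fin N → ℂ) (u : Fin N) :
    ∑ v : Fin N, (if u ≠ v then f v else 0) = ∑ v ∈ (univ : Finset (Fin N)).erase u, f v := by
  rw [← sum_filter, filter_ne]

lemma card_erase_univ (u : Fin N) : ((univ : Finset (Fin N)).erase u).card = N - 1 := by
  rw [card_erase_of_mem (mem_univ u), card_univ, Fintype.card_fin]

lemma S_formula (m : ℕ) (hm : m + 2 ≤ N) :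
    ∑ u : Fin N, ∑ v : Fin N,
      (if u ≠ v then (z u - z v) ^ 2 * Esym z (((univ : Finset (Fin N)).erase u).erase v) m else 0)
    = 2 * ((N - (m+1) : ℕ) : ℂ) * (∑ u : Fin N, z u ^ 2 * Esym z ((univ : Finset (Fin N)).erase u) m)
      - 2 * ((m : ℂ) + 1) * ((m : ℂ) + 2) * Esym z (univ : Finset (Fin N)) (m + 2) := by
  have hmN : m ≤ N - 1 := by omega
  have split : ∀ u v : Fin N,
      (if u ≠ v then (z u - z v) ^ 2 * Esym z (((univ : Finset (Fin N)).erase u).erase v) m else 0)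
      = (if u ≠ v then z u ^ 2 * Esym z (((univ : Finset (Fin N)).erase u).erase v) m else 0)
        + (if u ≠ v then z v ^ 2 * Esym z (((univ : Finset (Fin N)).erase v).erase u) m else 0)
        - 2 * (if u ≠ v then z u * (z v * Esym z (((univ : Finset (Fin N)).erase u).erase v) m) else 0) := by
    intro u v
    by_cases h : u = v
    · simp [h]
    · simp only [if_pos h, Ne, h, not_false_iff, if_true]
      rw [erase_right_comm]
      ring
  simp only [split, sum_add_distrib, sum_sub_distrib, ← mul_sum]
  have hA : ∑ u : Fin N, ∑ v : Fin N,
      (if u ≠ v then z u ^ 2 * Esym z (((univ : Finset (Fin N)).erase u).erase v) m else 0)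
      = ((N - (m+1) : ℕ) : ℂ) * ∑ u : Fin N, z u ^ 2 * Esym z ((univ : Finset (Fin N)).erase u) m := by
    rw [mul_sum]
    refine sum_congr rfl fun u _ => ?_
    rw [ite2erase, ← mul_sum, sum_Esym z _ m (by rw [card_erase_univ]; exact hmN),
      card_erase_univ]
    have : N - 1 - m = N - (m + 1) := by omega
    rw [this]
    ring
  have hB : ∑ u : Fin N, ∑ v : Fin N,
      (if u ≠ v then z v ^ 2 * Esym z (((univ : Finset (Fin N)).erase v).erase u) m else 0)
      = ∑ u : Fin N, ∑ v : Fin N,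
      (if u ≠ v then z u ^ 2 * Esym z (((univ : Finset (Fin N)).erase u).erase v) m else 0) := by
    rw [sum_comm]
    refine sum_congr rfl fun u _ => sum_congr rfl fun v _ => ?_
    by_cases h : u = v
    · simp [h]
    · simp [h, Ne.symm h]
  have hC : ∑ u : Fin N, ∑ v : Fin N,
      (if u ≠ v then z u * (z v * Esym z (((univ : Finset (Fin N)).erase u).erase v) m) else 0)
      = ((m : ℂ) + 1) * (((m : ℂ) + 1) + 1) * Esym z (univ : Finset (Fin N)) (m + 2) := by
    have inner : ∀ u : Fin N, ∑ v : Fin N,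
        (if u ≠ v then z u * (z v * Esym z (((univ : Finset (Fin N)).erase u).erase v) m) else 0)
        = z u * (((m : ℂ) + 1) * Esym z ((univ : Finset (Fin N)).erase u) (m + 1)) := by
      intro u
      rw [ite2erase, ← mul_sum, sum_mul_Esym z ((univ : Finset (Fin N)).erase u) m]
    rw [sum_congr rfl fun u _ => inner u]
    have hsum := sum_mul_Esym z (univ : Finset (Fin N)) (m + 1)
    have hpull : ∑ u : Fin N, z u * (((m : ℂ) + 1) * Esym z ((univ : Finset (Fin N)).erase u) (m + 1))
        = ((m : ℂ) + 1) * ∑ u : Fin N, z u * Esym z ((univ : Finset (Fin N)).erase u) (m + 1) := by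
      rw [mul_sum]; exact sum_congr rfl fun u _ => by ring
    rw [hpull, hsum]
    push_cast
    ring
  rw [hA, hB, hA, hC]
  push_cast
  ring

lemma I2_formula (m : ℕ) :
    (∑ j : Fin N, z j) * Esym z (univ : Finset (Fin N)) (m + 1)
    = ((m : ℂ) + 2) * Esym z (univ : Finset (Fin N)) (m + 2)
      + ∑ u : Fin N, z u ^ 2 * Esym z ((univ : Finset (Fin N)).erase u) m := by
  rw [sum_mul]
  have h1 : ∀ u : Fin N, z u * Esym z (univ : Finset (Fin N)) (m + 1)
      = z u * Esym z ((univ : Finset (Fin N)).erase u) (m + 1)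
        + z u ^ 2 * Esym z ((univ : Finset (Fin N)).erase u) m := by
    intro u
    rw [Esym_erase z (mem_univ u) m]
    ring
  rw [sum_congr rfl fun u _ => h1 u, sum_add_distrib, sum_mul_Esym]
  push_cast
  ring

end FinN

lemma claim_alg (Nc mc a b p S Ck Ck' zt w : ℂ)
    (hNc : Nc ≠ 0) (hCk : Ck ≠ 0) (hm2 : mc + 2 ≠ 0) (hw0 : w ≠ 0)
    (hw : w = Nc - (mc + 1))
    (hS : S = 2 * w * p - 2 * (mc + 1) * (mc + 2) * b)
    (hI2 : Nc * zt * a = (mc + 2) * b + p)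
    (hch : Ck' = (mc + 2) * Ck / w) :
    -(1 / (2 * Nc)) * (S / ((mc + 2) * Ck)) = b / Ck - zt * a / Ck' := by
  have hp : p = Nc * zt * a - (mc + 2) * b := by linear_combination -hI2
  rw [hp] at hS
  subst hS hch hw
  field_simp
  ring

lemma telescope (g : ℕ → ℂ) (n : ℕ) (hn : 1 ≤ n) :
    ∑ k ∈ Finset.Icc 2 n, (g k - g (k - 1)) = g n - g 1 := by
  induction n, hn using Nat.le_induction with
  | base => simp
  | succ n hn ih =>
    rw [Finset.sum_Icc_succ_top (by omega : 2 ≤ n + 1), ih, Nat.add_sub_cancel]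
    ring

lemma ite_mul_pull (P : Prop) [Decidable P] (c a b : ℂ) :
    (if P then a * (c * b) else 0) = c * (if P then a * b else 0) := by
  by_cases h : P
  · simp only [if_pos h]; ring
  · simp [h]

/-- Expansion of the difference between the normalized elementary symmetric
polynomial of degree `n` and the `n`-th power of the arithmetic mean. -/
theorem stmt_2 (N n : ℕ) (hn : 1 ≤ n) (hnN : n ≤ N) (z : Fin N → ℂ)
    (zt : ℂ) (hzt : zt = (1 / (N : ℂ)) * ∑ j : Fin N, z j) :
    (∑ J ∈ (univ : Finset (Fin N)).powersetCard n, ∏ j ∈ J, z j) / (N.choose n : ℂ)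
        - zt ^ n
    = -(1 / (2 * (N : ℂ))) * ∑ u : Fin N, ∑ v : Fin N,
        if u ≠ v then
          (z u - z v) ^ 2 *
            ∑ k ∈ Finset.Icc 2 n,
              (zt ^ (n - k) / ((k : ℂ) * (N.choose k : ℂ))) *
                ∑ J ∈ ((univ : Finset (Fin N)) \ {u, v}).powersetCard (k - 2),
                  ∏ j ∈ J, z j
        else 0 := by
  have hN : 1 ≤ N := le_trans hn hnN
  have hNc : (N : ℂ) ≠ 0 := Nat.cast_ne_zero.mpr (by omega)
  have hzsum : (N : ℂ) * zt = ∑ j : Fin N, z j := by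
    rw [hzt]; field_simp
  have hsd : ∀ u v : Fin N, ((univ : Finset (Fin N)) \ {u, v})
      = ((univ : Finset (Fin N)).erase u).erase v := by
    intro u v
    ext x
    simp only [mem_sdiff, mem_insert, mem_singleton, mem_erase, mem_univ, true_and, and_true]
    tauto
  set g : ℕ → ℂ := fun k => zt ^ (n - k) * (Esym z (univ : Finset (Fin N)) k / (N.choose k : ℂ))
    with hg
  have hgn : g n = (∑ J ∈ (univ : Finset (Fin N)).powersetCard n, ∏ j ∈ J, z j)
      / (N.choose n : ℂ) := by
    simp [hg, Esym, Nat.sub_self]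
  have hE1 : Esym z (univ : Finset (Fin N)) 1 = ∑ j : Fin N, z j := by
    have h := sum_mul_Esym z (univ : Finset (Fin N)) 0
    simp only [Esym_zero, mul_one, Nat.cast_zero, zero_add, one_mul] at h
    rw [← h]
  have hg1 : g 1 = zt ^ n := by
    rw [hg]
    simp only [hE1, Nat.choose_one_right]
    rw [← hzsum]
    field_simp
    rw [← pow_succ, Nat.sub_add_cancel hn]
  rw [← hgn, ← hg1, ← telescope g n hn]
  -- now transform the RHS
  have hswap : ∑ u : Fin N, ∑ v : Fin N,
      (if u ≠ v then (z u - z v) ^ 2 *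
        ∑ k ∈ Finset.Icc 2 n, (zt ^ (n - k) / ((k : ℂ) * (N.choose k : ℂ))) *
          ∑ J ∈ ((univ : Finset (Fin N)) \ {u, v}).powersetCard (k - 2), ∏ j ∈ J, z j
       else 0)
      = ∑ k ∈ Finset.Icc 2 n, (zt ^ (n - k) / ((k : ℂ) * (N.choose k : ℂ))) *
          ∑ u : Fin N, ∑ v : Fin N,
            (if u ≠ v then (z u - z v) ^ 2 *
              Esym z (((univ : Finset (Fin N)).erase u).erase v) (k - 2) else 0) := by
    have h1 : ∀ u v : Fin N,
        (if u ≠ v then (z u - z v) ^ 2 *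
          ∑ k ∈ Finset.Icc 2 n, (zt ^ (n - k) / ((k : ℂ) * (N.choose k : ℂ))) *
            ∑ J ∈ ((univ : Finset (Fin N)) \ {u, v}).powersetCard (k - 2), ∏ j ∈ J, z j
         else 0)
        = ∑ k ∈ Finset.Icc 2 n,
            (if u ≠ v then (z u - z v) ^ 2 *
              ((zt ^ (n - k) / ((k : ℂ) * (N.choose k : ℂ))) *
                Esym z (((univ : Finset (Fin N)).erase u).erase v) (k - 2)) else 0) := by
      intro u v
      by_cases h : u = v
      · simp [h]
      · simp only [Ne, h, not_false_iff, if_true]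
        rw [mul_sum]
        refine sum_congr rfl fun k _ => ?_
        rw [hsd]
        rfl
    rw [sum_congr rfl fun u _ => congrArg _ (funext fun v => h1 u v)]
    rw [sum_congr rfl fun u _ => sum_comm, sum_comm]
    refine sum_congr rfl fun k _ => ?_
    simp only [ite_mul_pull, ← mul_sum]
  rw [hswap, mul_sum]
  refine sum_congr rfl fun k hk => ?_
  rw [Finset.mem_Icc] at hk
  obtain ⟨m, rfl⟩ : ∃ m, k = m + 2 := ⟨k - 2, by omega⟩
  have hm2N : m + 2 ≤ N := le_trans hk.2 hnN
  have hw0' : 1 ≤ N - (m + 1) := by omega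
  have hS := S_formula z m hm2N
  have hI2 := I2_formula z m
  rw [← hzsum] at hI2
  have hchN : N.choose (m + 2) * (m + 2) = N.choose (m + 1) * (N - (m + 1)) := Nat.choose_succ_right_eq N (m + 1)
  have hcast : ((N - (m + 1) : ℕ) : ℂ) = (N : ℂ) - ((m : ℂ) + 1) := by
    push_cast [Nat.cast_sub (by omega : m + 1 ≤ N)]
    ring
  have hch : ((m : ℂ) + 2) * (N.choose (m + 2) : ℂ)
      = ((N - (m + 1) : ℕ) : ℂ) * (N.choose (m + 1) : ℂ) := by
    have h2 := congrArg (fun t : ℕ => (t : ℂ)) hchN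
    push_cast [Nat.cast_sub (show m + 1 ≤ N by omega)] at h2 ⊢
    linear_combination h2
  have hCk : ((N.choose (m + 2) : ℕ) : ℂ) ≠ 0 :=
    Nat.cast_ne_zero.mpr (Nat.choose_pos hm2N).ne'
  have hw0 : ((N - (m + 1) : ℕ) : ℂ) ≠ 0 := Nat.cast_ne_zero.mpr (by omega)
  have hm2 : ((m : ℂ) + 2) ≠ 0 := by
    intro h
    have : ((m + 2 : ℕ) : ℂ) = 0 := by push_cast; linear_combination h
    exact (Nat.cast_ne_zero.mpr (by omega)) this
  have hch' : ((N.choose (m + 1) : ℕ) : ℂ)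
      = ((m : ℂ) + 2) * (N.choose (m + 2) : ℂ) / ((N - (m + 1) : ℕ) : ℂ) := by
    rw [eq_div_iff hw0]
    linear_combination -hch
  have claim := claim_alg (N : ℂ) (m : ℂ)
    (Esym z (univ : Finset (Fin N)) (m + 1)) (Esym z (univ : Finset (Fin N)) (m + 2))
    (∑ u : Fin N, z u ^ 2 * Esym z ((univ : Finset (Fin N)).erase u) m)
    (∑ u : Fin N, ∑ v : Fin N,
      (if u ≠ v then (z u - z v) ^ 2 *
        Esym z (((univ : Finset (Fin N)).erase u).erase v) m else 0))
    ((N.choose (m + 2) : ℕ) : ℂ) ((N.choose (m + 1) : ℕ) : ℂ) zt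
    ((N - (m + 1) : ℕ) : ℂ)
    hNc hCk hm2 hw0 hcast (by rw [hS]) hI2 hch'
  -- now finish
  have hpow : n - (m + 1) = (n - (m + 2)) + 1 := by omega
  rw [show m + 2 - 1 = m + 1 from rfl]
  simp only [hg]
  rw [show m + 2 - 2 = m from rfl, hpow, pow_succ zt (n - (m + 2))]
  push_cast
  linear_combination (-(zt ^ (n - (m + 2)))) * claim
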